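/- arXiv:0911.5124 — 7 statements merged into one kernel-verified Lean document; each statement's English description precedes it below -/
import Mathlib

section
/- Let n be a positive integer or ω, A a nontrivial Boolean algebra, and X a subset of the nonzero elements of A. Then X is n-independent if and only if for every finite R ⊆ X and every ε : R → {0,1}, if ∏_{x ∈ R} x^{ε(x)} = 0, then there is R' ⊆ R with |R'| ≤ n such that ε(x) = 1 for all x ∈ R' and ∏R' = 0. -/
open scoped Classical

variable {A : Type*}

/-- ω-independence: `⊥ ∉ X`, (⊥1), (⊥3). -/
def OmegaIndep [BooleanAlgebra A] (X : Set A) : Prop :=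
  (⊥ : A) ∉ X ∧
  (∀ F : Finset A, F.Nonempty → ↑F ⊆ X → F.sup id ≠ ⊤) ∧
  (∀ F G : Finset A, F.Nonempty → G.Nonempty → ↑F ⊆ X → ↑G ⊆ X →
      F.inf id ≠ ⊥ → F.inf id ≤ G.sup id → (F ∩ G).Nonempty)

/-- n-independence: `⊥ ∉ X`, (⊥1), (⊥2)_n, (⊥3); `n = ⊤` codes ω. -/
def NIndep [BooleanAlgebra A] (n : ℕ∞) (X : Set A) : Prop :=
  (⊥ : A) ∉ X ∧
  (∀ F : Finset A, F.Nonempty → ↑F ⊆ X → F.sup id ≠ ⊤) ∧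
  (∀ F : Finset A, F.Nonempty → ↑F ⊆ X → F.inf id = ⊥ →
      ∃ F' ⊆ F, (F'.card : ℕ∞) ≤ n ∧ F'.inf id = ⊥) ∧
  (∀ F G : Finset A, F.Nonempty → G.Nonempty → ↑F ⊆ X → ↑G ⊆ X →
      F.inf id ≠ ⊥ → F.inf id ≤ G.sup id → (F ∩ G).Nonempty)

/-- Elementary product `∏_{x ∈ R} x^{ε x}`. -/
def elemProd [BooleanAlgebra A] (R : Finset A) (ε : A → Bool) : A :=
  R.inf (fun x => if ε x then x else xᶜ)

/-- `f` is n-preserving on `X` (`n = ⊤` codes ω-preserving). -/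
def NPreserving [BooleanAlgebra A] {B : Type*} [BooleanAlgebra B]
    (n : ℕ∞) (X : Set A) (f : A → B) : Prop :=
  ∀ F : Finset A, ↑F ⊆ X → (F.card : ℕ∞) ≤ n → F.inf id = ⊥ → F.inf f = ⊥

/-- Membership in the subalgebra generated by `X`. -/
inductive Gen [BooleanAlgebra A] (X : Set A) : A → Prop
  | of {x : A} : x ∈ X → Gen X x
  | bot : Gen X ⊥
  | top : Gen X ⊤
  | inf {x y : A} : Gen X x → Gen X y → Gen X (x ⊓ y)
  | sup {x y : A} : Gen X x → Gen X y → Gen X (x ⊔ y)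
  | compl {x : A} : Gen X x → Gen X xᶜ

/-- `X` generates the Boolean algebra `A`. -/
def Generates [BooleanAlgebra A] (X : Set A) : Prop := ∀ a : A, Gen X a

/-- for `1 ≤ n ≤ ω`, `A` nontrivial, `X ⊆ A⁺`: `X` is n-independent iff
every zero elementary product has a subset of ≤ n positively-occurring elements with
zero product. -/
theorem stmt_2 [BooleanAlgebra A] [Nontrivial A] (n : ℕ∞) (hn : 1 ≤ n)
    (X : Set A) (hX : ∀ x ∈ X, x ≠ ⊥) :
    NIndep n X ↔
    ∀ (R : Finset A), ↑R ⊆ X → ∀ ε : A → Bool, elemProd R ε = ⊥ →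
      ∃ R' ⊆ R, (R'.card : ℕ∞) ≤ n ∧ (∀ x ∈ R', ε x = true) ∧ R'.inf id = ⊥ := by
  constructor
  · rintro ⟨hbot, h1, h2, h3⟩ R hR ε hprod
    set F := R.filter (fun x => ε x = true) with hF
    set G := R.filter (fun x => ε x ≠ true) with hG
    have hsplit : F ∪ G = R := Finset.filter_union_filter_not_eq _ R
    have hFG : elemProd R ε = F.inf id ⊓ G.inf (fun x => xᶜ) := by
      rw [elemProd, ← hsplit, Finset.inf_union]
      congr 1
      · exact Finset.inf_congr rfl (fun x hx => by
          simp only [hF, Finset.mem_filter] at hx; simp [hx.2])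
      · exact Finset.inf_congr rfl (fun x hx => by
          simp only [hG, Finset.mem_filter] at hx; simp [hx.2])
    have hGc : G.inf (fun x => xᶜ) = (G.sup id)ᶜ := by
      rw [Finset.compl_sup]; rfl
    rw [hFG, hGc] at hprod
    have hFR : F ⊆ R := Finset.filter_subset _ _
    have hGR : G ⊆ R := Finset.filter_subset _ _
    rcases F.eq_empty_or_nonempty with hFe | hFne
    · -- F empty : inf F = ⊤, so (G.sup id)ᶜ = ⊥, G.sup = ⊤
      rw [hFe] at hprod
      simp only [Finset.inf_empty, top_inf_eq, compl_eq_bot] at hprod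
      rcases G.eq_empty_or_nonempty with hGe | hGne
      · rw [hGe] at hprod; simp at hprod
      · exact absurd hprod (h1 G hGne (fun x hx => hR (hGR hx)))
    · by_cases hFi : F.inf id = ⊥
      · obtain ⟨F', hF'F, hcard, hinf⟩ := h2 F hFne
          (fun x hx => hR (hFR hx)) hFi
        exact ⟨F', hF'F.trans hFR, hcard,
          fun x hx => (Finset.mem_filter.mp (hF'F hx)).2, hinf⟩
      · -- F.inf ≠ ⊥, so F.inf ≤ G.sup
        have hle : F.inf id ≤ G.sup id := by
          rwa [← sdiff_eq, sdiff_eq_bot_iff] at hprod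
        rcases G.eq_empty_or_nonempty with hGe | hGne
        · rw [hGe] at hle; simp at hle; exact absurd hle hFi
        · obtain ⟨x, hx⟩ := h3 F G hFne hGne (fun x hx => hR (hFR hx))
            (fun x hx => hR (hGR hx)) hFi hle
          rw [Finset.mem_inter, hF, hG, Finset.mem_filter, Finset.mem_filter] at hx
          exact absurd hx.1.2 hx.2.2
  · intro h
    refine ⟨fun hb => hX ⊥ hb rfl, ?_, ?_, ?_⟩
    · intro F hFne hFX hsup
      obtain ⟨R', hR'F, _, hεR', hinf⟩ := h F hFX (fun _ => false) (by
        simp only [elemProd, if_neg Bool.false_ne_true]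
        rw [show (fun x : A => xᶜ) = (fun x => (id x)ᶜ) from rfl, ← Finset.compl_sup,
          hsup, compl_top])
      have : R' = ∅ := Finset.eq_empty_of_forall_notMem fun x hx => by
        simpa using hεR' x hx
      rw [this] at hinf; simp at hinf
    · intro F hFne hFX hFi
      obtain ⟨R', hR'F, hcard, _, hinf⟩ := h F hFX (fun _ => true) (by
        simpa [elemProd] using (show F.inf (fun x => x) = ⊥ from hFi))
      exact ⟨R', hR'F, hcard, hinf⟩
    · intro F G hFne hGne hFX hGX hFi hle
      by_contra hcon
      rw [Finset.not_nonempty_iff_eq_empty] at hcon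
      have hdisj : Disjoint F G := Finset.disjoint_iff_inter_eq_empty.mpr hcon
      set ε : A → Bool := fun x => decide (x ∈ F) with hε
      have hprod : elemProd (F ∪ G) ε = ⊥ := by
        rw [elemProd, Finset.inf_union]
        have h1 : F.inf (fun x => if ε x then x else xᶜ) = F.inf id :=
          Finset.inf_congr rfl (fun x hx => by simp [hε, hx])
        have h2 : G.inf (fun x => if ε x then x else xᶜ) = (G.sup id)ᶜ := by
          rw [show (G.sup id)ᶜ = G.inf fun x => (id x)ᶜ from Finset.compl_sup G id]
          refine Finset.inf_congr rfl (fun x hx => ?_)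
          have : x ∉ F := fun hxF => Finset.disjoint_left.mp hdisj hxF hx
          simp [hε, this]
        rw [h1, h2, ← sdiff_eq, sdiff_eq_bot_iff]
        exact hle
      obtain ⟨R', hR'sub, _, hεR', hinf⟩ := h (F ∪ G)
        (by rw [Finset.coe_union]; exact Set.union_subset hFX hGX) ε hprod
      have hR'F : R' ⊆ F := fun x hx => by
        have := hεR' x hx; simpa [hε] using this
      exact hFi (le_antisymm ((Finset.inf_mono hR'F).trans hinf.le) bot_le)
end

section
/- For any hypergraph G = ⟨V, E⟩ (with E ⊆ P(V) consisting of sets of size at least 2), the family {v_+ : v ∈ V}, where v_+ is the set of anticliques of G containing v, is an ω-independent subset of the power set algebra of the set of anticliques of G. -/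
open scoped Classical

variable {A : Type*}

/-- A set of vertices is an anticlique if it includes no hyperedge. -/
def IsAnticlique {V : Type*} (E : Set (Set V)) (S : Set V) : Prop :=
  ∀ e ∈ E, ¬ e ⊆ S

/-- for a hypergraph with all hyperedges of size ≥ 2, the family
`{v₊ : v ∈ V}` is ω-independent in the power set algebra of the anticliques. -/
theorem stmt_9 {V : Type*} (E : Set (Set V)) (hE : ∀ e ∈ E, e.Nontrivial) :
    OmegaIndep (Set.range
      (fun v : V => {p : {S : Set V // IsAnticlique E S} | v ∈ p.val})) := by
  set vp : V → Set {S : Set V // IsAnticlique E S} :=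
    fun v => {p | v ∈ p.val} with hvp
  have hsingle : ∀ v : V, IsAnticlique E {v} := by
    intro v e he hsub
    obtain ⟨x, hx, y, hy, hxy⟩ := hE e he
    have hxv : x = v := hsub hx
    have hyv : y = v := hsub hy
    exact hxy (hxv.trans hyv.symm)
  have hempty : IsAnticlique E (∅ : Set V) := by
    intro e he hsub
    obtain ⟨x, hx, -⟩ := hE e he
    exact hsub hx
  refine ⟨?_, ?_, ?_⟩
  · rintro ⟨v, hv⟩
    have hmem : (⟨{v}, hsingle v⟩ : {S : Set V // IsAnticlique E S}) ∈ vp v :=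
      Set.mem_singleton v
    rw [hv] at hmem
    exact hmem
  · intro F hFne hFX htop
    have hmem : (⟨∅, hempty⟩ : {S : Set V // IsAnticlique E S}) ∈ F.sup id := by
      rw [htop]; trivial
    rw [Finset.sup_set_eq_biUnion] at hmem
    obtain ⟨a, haF, hpa⟩ := Set.mem_iUnion₂.1 hmem
    obtain ⟨v, rfl⟩ := hFX haF
    exact hpa
  · intro F G hFne hGne hFX hGX hFbot hle
    obtain ⟨p, hp⟩ := Set.nonempty_iff_ne_empty.2 hFbot
    have hpall : ∀ a ∈ F, p ∈ a := by
      intro a ha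
      exact (Finset.inf_le ha : F.inf id ≤ id a) hp
    set S' : Set V := {u | u ∈ p.val ∧ (vp u) ∈ F} with hS'
    have hS'anti : IsAnticlique E S' := fun e he hsub =>
      p.prop e he (fun x hx => (hsub hx).1)
    set p' : {S : Set V // IsAnticlique E S} := ⟨S', hS'anti⟩ with hp'
    have hp'F : p' ∈ F.inf id := by
      rw [Finset.inf_set_eq_iInter]
      refine Set.mem_iInter₂.2 (fun a ha => ?_)
      obtain ⟨v, rfl⟩ := hFX ha
      exact ⟨hpall _ ha, ha⟩
    have hp'G : p' ∈ G.sup id := hle hp'F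
    rw [Finset.sup_set_eq_biUnion] at hp'G
    obtain ⟨b, hbG, hp'b⟩ := Set.mem_iUnion₂.1 hp'G
    obtain ⟨w, rfl⟩ := hGX hbG
    exact ⟨vp w, Finset.mem_inter.2 ⟨hp'b.2, hbG⟩⟩
end

section
/- For any hypergraph G = ⟨V, E⟩ with all hyperedges of size at most n (and size at least 2), the family {v_+ : v ∈ V} of sets v_+ = {A anticlique of G : v ∈ A} is an n-independent subset of the power set algebra of the set of anticliques of G. -/
open scoped Classical

variable {A : Type*}

/-- for a hypergraph with all hyperedges of size ≤ n (and ≥ 2), the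
family `{v₊ : v ∈ V}` is n-independent in the power set algebra of the anticliques. -/
theorem stmt_10 {V : Type*} (n : ℕ) (E : Set (Set V))
    (hE2 : ∀ e ∈ E, e.Nontrivial)
    (hEn : ∀ e ∈ E, e.Finite ∧ e.ncard ≤ n) :
    NIndep (n : ℕ∞) (Set.range
      (fun v : V => {p : {S : Set V // IsAnticlique E S} | v ∈ p.val})) := by
  classical
  set f : V → Set {S : Set V // IsAnticlique E S} :=
    fun v : V => {p : {S : Set V // IsAnticlique E S} | v ∈ p.val} with hf
  have hdown : ∀ S T : Set V, T ⊆ S → IsAnticlique E S → IsAnticlique E T := by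
    intro S T hTS hS e he hsub
    exact hS e he (hsub.trans hTS)
  have hmemInf : ∀ (F : Finset (Set {S : Set V // IsAnticlique E S}))
      (p : {S : Set V // IsAnticlique E S}),
      p ∈ F.inf id ↔ ∀ s ∈ F, p ∈ s := by
    intro F p
    simp [Finset.inf_eq_iInf, Set.mem_iInter]
  have hmemSup : ∀ (F : Finset (Set {S : Set V // IsAnticlique E S}))
      (p : {S : Set V // IsAnticlique E S}),
      p ∈ F.sup id ↔ ∃ s ∈ F, p ∈ s := by
    intro F p
    simp [Finset.sup_eq_iSup, Set.mem_iUnion]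
  refine ⟨?_, ?_, ?_, ?_⟩
  · rintro ⟨v, hv⟩
    have hanti : IsAnticlique E {v} := by
      intro e he hsub
      obtain ⟨a, ha, b, hb, hab⟩ := hE2 e he
      exact hab ((hsub ha).trans (hsub hb).symm)
    have : (⟨{v}, hanti⟩ : {S : Set V // IsAnticlique E S}) ∈ (⊥ : Set _) := by
      rw [← hv]; exact rfl
    exact this
  · intro F hFne hFX hFtop
    have hempty : IsAnticlique E (∅ : Set V) := by
      intro e he hsub
      obtain ⟨a, ha, -⟩ := hE2 e he
      exact hsub ha
    have hp : (⟨∅, hempty⟩ : {S : Set V // IsAnticlique E S}) ∈ F.sup id := by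
      rw [hFtop]; trivial
    obtain ⟨s, hsF, hps⟩ := (hmemSup F _).1 hp
    obtain ⟨v, rfl⟩ := hFX hsF
    exact hps
  · intro F hFne hFX hFbot
    set W : Set V := {v | f v ∈ F} with hW
    have hWnot : ¬ IsAnticlique E W := by
      intro hanti
      have hp : (⟨W, hanti⟩ : {S : Set V // IsAnticlique E S}) ∈ F.inf id := by
        rw [hmemInf]
        intro s hs
        obtain ⟨v, rfl⟩ := hFX hs
        exact hs
      rw [hFbot] at hp
      exact hp
    have ⟨e, he, heW⟩ : ∃ e ∈ E, e ⊆ W := by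
      by_contra h
      push_neg at h
      exact hWnot fun e he => h e he
    obtain ⟨hefin, hecard⟩ := hEn e he
    refine ⟨hefin.toFinset.image f, ?_, ?_, ?_⟩
    · intro s hs
      simp only [Finset.mem_image, Set.Finite.mem_toFinset] at hs
      obtain ⟨v, hv, rfl⟩ := hs
      exact heW hv
    · calc ((hefin.toFinset.image f).card : ℕ∞)
          ≤ (hefin.toFinset.card : ℕ∞) := by
            exact_mod_cast Finset.card_image_le
        _ ≤ (n : ℕ∞) := by
            rw [Set.ncard_eq_toFinset_card e hefin] at hecard
            exact_mod_cast hecard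
    · refine Set.eq_empty_iff_forall_notMem.2 fun p hp => ?_
      refine p.2 e he fun v hv => ?_
      exact (hmemInf _ p).1 hp (f v) (Finset.mem_image_of_mem f (hefin.mem_toFinset.2 hv))
  · intro F G hFne hGne hFX hGX hFbot hFG
    obtain ⟨p, hp⟩ := Set.nonempty_iff_ne_empty.2 hFbot
    set W : Set V := {v | f v ∈ F} with hW
    have hWp : W ⊆ p.val := by
      intro v hv
      exact (hmemInf F p).1 hp (f v) hv
    have hWanti : IsAnticlique E W := hdown _ _ hWp p.2
    have hq : (⟨W, hWanti⟩ : {S : Set V // IsAnticlique E S}) ∈ F.inf id := by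
      rw [hmemInf]
      intro s hs
      obtain ⟨v, rfl⟩ := hFX hs
      exact hs
    obtain ⟨s, hsG, hqs⟩ := (hmemSup G _).1 (hFG hq)
    obtain ⟨v, rfl⟩ := hGX hsG
    exact ⟨f v, Finset.mem_inter.2 ⟨hqs, hsG⟩⟩
end

section
/- Let 2 ≤ n ≤ ω. If H ⊆ A and K ⊆ B are n-independent subsets of Boolean algebras A and B, then L = (H × {0}) ∪ ({0} × K) is an n-independent subset of the product Boolean algebra A × B. -/
open scoped Classical

variable {A : Type*}

section Helpers


variable {B : Type*} [BooleanAlgebra A] [BooleanAlgebra B]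

lemma sup_imgA (S : Finset A) :
    (S.image (fun h => (h,(⊥:B)))).sup id = (S.sup id, ⊥) := by
  rw [Finset.sup_image]
  induction S using Finset.induction with
  | empty => rfl
  | insert h ih => simp_all [Prod.sup_def]

lemma sup_imgB (T : Finset B) :
    (T.image (fun k => ((⊥:A),k))).sup id = (⊥, T.sup id) := by
  rw [Finset.sup_image]
  induction T using Finset.induction with
  | empty => rfl
  | insert h ih => simp_all [Prod.sup_def]

lemma inf_imgA {S : Finset A} (hS : S.Nonempty) :
    (S.image (fun h => (h,(⊥:B)))).inf id = (S.inf id, ⊥) := by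
  rw [Finset.inf_image]
  induction hS using Finset.Nonempty.cons_induction with
  | singleton => simp
  | cons a s ha hs ih => simp_all [Prod.inf_def]

lemma inf_imgB {T : Finset B} (hT : T.Nonempty) :
    (T.image (fun k => ((⊥:A),k))).inf id = (⊥, T.inf id) := by
  rw [Finset.inf_image]
  induction hT using Finset.Nonempty.cons_induction with
  | singleton => simp
  | cons a s ha hs ih => simp_all [Prod.inf_def]

lemma decomp {H : Set A} {K : Set B} {F : Finset (A×B)}
    (hbH : (⊥:A) ∉ H)
    (hF : ↑F ⊆ (fun h => (h,(⊥:B))) '' H ∪ (fun k => ((⊥:A),k)) '' K) :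
    ∃ S : Finset A, ∃ T : Finset B, ↑S ⊆ H ∧ ↑T ⊆ K ∧
      F = S.image (fun h => (h,(⊥:B))) ∪ T.image (fun k => ((⊥:A),k)) := by
  have key : ∀ p ∈ F, (p.1 ≠ ⊥ ∧ p.1 ∈ H ∧ p = (p.1, (⊥:B))) ∨
      (p.1 = ⊥ ∧ p.2 ∈ K ∧ p = ((⊥:A), p.2)) := by
    intro p hp
    rcases hF hp with ⟨h, hh, rfl⟩ | ⟨k, hk, rfl⟩
    · exact Or.inl ⟨fun e => hbH (e ▸ hh), hh, rfl⟩
    · exact Or.inr ⟨rfl, hk, rfl⟩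
  refine ⟨(F.filter (fun p => p.1 ≠ ⊥)).image Prod.fst,
          (F.filter (fun p => p.1 = ⊥)).image Prod.snd, ?_, ?_, ?_⟩
  · intro x hx
    simp only [Finset.coe_image, Set.mem_image, Finset.mem_coe, Finset.mem_filter] at hx
    obtain ⟨p, ⟨hpF, hp1⟩, rfl⟩ := hx
    rcases key p hpF with ⟨_, h2, _⟩ | ⟨h1, _, _⟩
    · exact h2
    · exact absurd h1 hp1
  · intro x hx
    simp only [Finset.coe_image, Set.mem_image, Finset.mem_coe, Finset.mem_filter] at hx
    obtain ⟨p, ⟨hpF, hp1⟩, rfl⟩ := hx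
    rcases key p hpF with ⟨h1, _, _⟩ | ⟨_, h2, _⟩
    · exact absurd hp1 h1
    · exact h2
  · ext p
    simp only [Finset.mem_union, Finset.mem_image, Finset.mem_filter]
    constructor
    · intro hp
      rcases key p hp with ⟨h1, _, h3⟩ | ⟨h1, _, h3⟩
      · exact Or.inl ⟨p.1, ⟨p, ⟨hp, h1⟩, rfl⟩, h3.symm⟩
      · exact Or.inr ⟨p.2, ⟨p, ⟨hp, h1⟩, rfl⟩, h3.symm⟩
    · rintro (⟨x, ⟨q, ⟨hq, hq1⟩, rfl⟩, rfl⟩ | ⟨x, ⟨q, ⟨hq, hq1⟩, rfl⟩, rfl⟩)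
      · rcases key q hq with ⟨_, _, h3⟩ | ⟨h1, _, _⟩
        · exact h3 ▸ hq
        · exact absurd h1 hq1
      · rcases key q hq with ⟨h1, _, _⟩ | ⟨_, _, h3⟩
        · exact absurd hq1 h1
        · exact h3 ▸ hq

lemma injA : Function.Injective (fun h : A => (h,(⊥:B))) := fun a b h => (Prod.mk.injEq _ _ _ _ ▸ h).1

lemma injB : Function.Injective (fun k : B => ((⊥:A),k)) := fun a b h => (Prod.mk.injEq _ _ _ _ ▸ h).2

end Helpers

/-- for `2 ≤ n ≤ ω`, if `H ⊆ A` and `K ⊆ B` are n-independent, then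
`(H × {0}) ∪ ({0} × K)` is n-independent in `A × B`. -/


theorem stmt_11 {B : Type*} [BooleanAlgebra A] [BooleanAlgebra B]
    (n : ℕ∞) (hn : 2 ≤ n) (H : Set A) (K : Set B)
    (hH : NIndep n H) (hK : NIndep n K) :
    NIndep n ((fun h => (h, (⊥ : B))) '' H ∪ (fun k => ((⊥ : A), k)) '' K) := by
  obtain ⟨hHb, hH1, hH2, hH3⟩ := hH
  obtain ⟨hKb, hK1, hK2, hK3⟩ := hK
  refine ⟨?_, ?_, ?_, ?_⟩
  · rintro (⟨h, hh, he⟩ | ⟨k, hk, he⟩)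
    · exact hHb (by rwa [show h = ⊥ from congrArg Prod.fst he] at hh)
    · exact hKb (by rwa [show k = ⊥ from congrArg Prod.snd he] at hk)
  · -- (⊥1)
    intro F hFne hF
    obtain ⟨S, T, hS, hT, rfl⟩ := decomp hHb hF
    rw [Finset.sup_union, sup_imgA, sup_imgB]
    rcases S.eq_empty_or_nonempty with rfl | hSne
    · rcases T.eq_empty_or_nonempty with rfl | hTne
      · simp at hFne
      · intro e
        have e2 : T.sup id = ⊤ := by
          have := congrArg Prod.snd e
          simpa [Prod.sup_def] using this
        exact hK1 T hTne hT e2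
    · intro e
      have e2 : S.sup id = ⊤ := by
        have := congrArg Prod.fst e
        simpa [Prod.sup_def] using this
      exact hH1 S hSne hS e2
  · -- (⊥2)
    intro F hFne hF hFinf
    obtain ⟨S, T, hS, hT, rfl⟩ := decomp hHb hF
    rcases S.eq_empty_or_nonempty with rfl | hSne
    · rcases T.eq_empty_or_nonempty with rfl | hTne
      · simp at hFne
      · -- pure K
        simp only [Finset.image_empty, Finset.empty_union] at hFinf ⊢
        rw [inf_imgB hTne] at hFinf
        have hTinf : T.inf id = ⊥ := congrArg Prod.snd hFinf
        obtain ⟨T', hT'sub, hT'card, hT'inf⟩ := hK2 T hTne hT hTinf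
        have hT'ne : T'.Nonempty := by
          rcases T'.eq_empty_or_nonempty with rfl | h
          · exfalso
            obtain ⟨t, ht⟩ := hTne
            simp only [Finset.inf_empty] at hT'inf
            have : t = ⊥ := le_bot_iff.mp (hT'inf ▸ le_top)
            exact hKb (this ▸ hT ht)
          · exact h
        refine ⟨T'.image (fun k => ((⊥:A),k)), Finset.image_subset_image hT'sub, ?_, ?_⟩
        · rwa [Finset.card_image_of_injective _ injB]
        · rw [inf_imgB hT'ne, hT'inf]; rfl
    · rcases T.eq_empty_or_nonempty with rfl | hTne
      · -- pure H
        simp only [Finset.image_empty, Finset.union_empty] at hFinf ⊢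
        rw [inf_imgA hSne] at hFinf
        have hSinf : S.inf id = ⊥ := congrArg Prod.fst hFinf
        obtain ⟨S', hS'sub, hS'card, hS'inf⟩ := hH2 S hSne hS hSinf
        have hS'ne : S'.Nonempty := by
          rcases S'.eq_empty_or_nonempty with rfl | h
          · exfalso
            obtain ⟨s, hs⟩ := hSne
            simp only [Finset.inf_empty] at hS'inf
            have : s = ⊥ := le_bot_iff.mp (hS'inf ▸ le_top)
            exact hHb (this ▸ hS hs)
          · exact h
        refine ⟨S'.image (fun h => (h,(⊥:B))), Finset.image_subset_image hS'sub, ?_, ?_⟩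
        · rwa [Finset.card_image_of_injective _ injA]
        · rw [inf_imgA hS'ne, hS'inf]; rfl
      · -- mixed: pick one of each
        obtain ⟨s, hs⟩ := hSne
        obtain ⟨t, ht⟩ := hTne
        refine ⟨{(s,(⊥:B)), ((⊥:A),t)}, ?_, ?_, ?_⟩
        · intro p hp
          rcases Finset.mem_insert.mp hp with rfl | hp
          · exact Finset.mem_union_left _ (Finset.mem_image_of_mem _ hs)
          · rw [Finset.mem_singleton.mp hp]
            exact Finset.mem_union_right _ (Finset.mem_image_of_mem _ ht)
        · refine le_trans ?_ hn
          have h1 : ({(s,(⊥:B)), ((⊥:A),t)} : Finset (A × B)).card ≤ 2 :=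
            le_trans (Finset.card_insert_le _ _) (by simp)
          exact_mod_cast h1
        · rw [Finset.inf_insert, Finset.inf_singleton]
          show (s,(⊥:B)) ⊓ ((⊥:A),t) = ⊥
          rw [Prod.inf_def]
          simp only [inf_bot_eq, bot_inf_eq]
          rfl
  · -- (⊥3)
    intro F G hFne hGne hF hG hFinf hle
    obtain ⟨S, T, hS, hT, rfl⟩ := decomp hHb hF
    obtain ⟨S', T', hS', hT', rfl⟩ := decomp hHb hG
    have hGsup : (S'.image (fun h => (h,(⊥:B))) ∪ T'.image (fun k => ((⊥:A),k))).sup id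
        = (S'.sup id, T'.sup id) := by
      rw [Finset.sup_union, sup_imgA, sup_imgB, Prod.sup_def]
      simp
    rcases S.eq_empty_or_nonempty with rfl | hSne
    · rcases T.eq_empty_or_nonempty with rfl | hTne
      · simp at hFne
      · -- F pure K
        simp only [Finset.image_empty, Finset.empty_union] at hFinf hle ⊢
        rw [inf_imgB hTne] at hFinf hle
        rw [hGsup] at hle
        have h2 : T.inf id ≤ T'.sup id := (Prod.mk_le_mk.mp hle).2
        have hTinf : T.inf id ≠ ⊥ := fun e => hFinf (by rw [e]; rfl)
        have hT'ne : T'.Nonempty := by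
          rcases T'.eq_empty_or_nonempty with rfl | h
          · simp only [Finset.sup_empty] at h2
            exact absurd (le_bot_iff.mp h2) hTinf
          · exact h
        obtain ⟨t, ht⟩ := hK3 T T' hTne hT'ne hT hT' hTinf h2
        simp only [Finset.mem_inter] at ht
        refine ⟨((⊥:A),t), ?_⟩
        simp only [Finset.mem_inter]
        exact ⟨Finset.mem_image_of_mem _ ht.1,
          Finset.mem_union_right _ (Finset.mem_image_of_mem _ ht.2)⟩
    · rcases T.eq_empty_or_nonempty with rfl | hTne
      · -- F pure H
        simp only [Finset.image_empty, Finset.union_empty] at hFinf hle ⊢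
        rw [inf_imgA hSne] at hFinf hle
        rw [hGsup] at hle
        have h2 : S.inf id ≤ S'.sup id := (Prod.mk_le_mk.mp hle).1
        have hSinf : S.inf id ≠ ⊥ := fun e => hFinf (by rw [e]; rfl)
        have hS'ne : S'.Nonempty := by
          rcases S'.eq_empty_or_nonempty with rfl | h
          · simp only [Finset.sup_empty] at h2
            exact absurd (le_bot_iff.mp h2) hSinf
          · exact h
        obtain ⟨s, hs⟩ := hH3 S S' hSne hS'ne hS hS' hSinf h2
        simp only [Finset.mem_inter] at hs
        refine ⟨(s,(⊥:B)), ?_⟩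
        simp only [Finset.mem_inter]
        exact ⟨Finset.mem_image_of_mem _ hs.1,
          Finset.mem_union_left _ (Finset.mem_image_of_mem _ hs.2)⟩
      · -- mixed: inf is ⊥, contradiction
        exfalso
        apply hFinf
        rw [Finset.inf_union, inf_imgA hSne, inf_imgB hTne, Prod.inf_def]
        simp only [inf_bot_eq, bot_inf_eq]
        rfl
end

section
/- Let B be a Boolean algebra, 2 ≤ n ≤ ω, and let H be an infinite n-independent subset of the nonzero elements of B. If H has an upper bound b with b < 1, then H ∪ {-b} is n-independent; consequently, if H is maximal among n-independent subsets of B⁺ and infinite, then ∑H = 1 (1 is the only upper bound of H). -/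
open scoped Classical

variable {A : Type*}

/-- for `2 ≤ n ≤ ω` and an infinite n-independent `H ⊆ B⁺`: adjoining
`-b` for any upper bound `b < 1` keeps n-independence; hence if `H` is maximal among
n-independent subsets of `B⁺`, then `∑H = 1`, i.e. `⊤` is the least upper bound. -/
theorem stmt_12 {B : Type*} [BooleanAlgebra B] (n : ℕ∞) (hn : 2 ≤ n)
    (H : Set B) (hH0 : ∀ x ∈ H, x ≠ ⊥) (hH : NIndep n H) (hinf : H.Infinite) :
    (∀ b : B, b < ⊤ → (∀ h ∈ H, h ≤ b) → NIndep n (H ∪ {bᶜ})) ∧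
    ((∀ Y : Set B, (∀ y ∈ Y, y ≠ ⊥) → NIndep n Y → H ⊆ Y → Y = H) →
      IsLUB H ⊤) := by
  obtain ⟨hb0, hb1, hb2, hb3⟩ := hH
  have main : ∀ b : B, b < ⊤ → (∀ h ∈ H, h ≤ b) → NIndep n (H ∪ {bᶜ}) := by
    intro b hbt hub
    have hbc : (bᶜ : B) ≠ ⊥ := by
      simpa [compl_eq_bot] using hbt.ne
    have hsub : ∀ F : Finset B, ↑F ⊆ H ∪ {bᶜ} → ↑(F.erase bᶜ) ⊆ H := by
      intro F hF x hx
      rcases Finset.mem_erase.mp hx with ⟨hne, hxF⟩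
      rcases hF hxF with h | h
      · exact h
      · exact absurd h hne
    have hnotin : ∀ F : Finset B, ↑F ⊆ H ∪ {bᶜ} → bᶜ ∉ F → ↑F ⊆ H := by
      intro F hF hb x hx
      rcases hF hx with h | h
      · exact h
      · rw [Set.mem_singleton_iff] at h; subst h; exact absurd hx hb
    have hsupb : ∀ F : Finset B, ↑F ⊆ H → F.sup id ≤ b :=
      fun F hF => Finset.sup_le fun x hx => hub x (hF (by exact_mod_cast hx))
    have hinfb : ∀ F : Finset B, F.Nonempty → ↑F ⊆ H → F.inf id ≤ b := by
      intro F ⟨x, hx⟩ hF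
      exact le_trans (Finset.inf_le hx) (hub x (hF hx))
    refine ⟨?_, ?_, ?_, ?_⟩
    · intro h
      rcases h with h | h
      · exact hb0 h
      · rw [Set.mem_singleton_iff] at h; exact hbc h.symm
    · -- (⊥1)
      intro F hFne hF htop
      by_cases hbF : bᶜ ∈ F
      · set F₀ := F.erase bᶜ with hF₀
        have hins : F = insert bᶜ F₀ := (Finset.insert_erase hbF).symm
        have hsup : F.sup id = bᶜ ⊔ F₀.sup id := by
          rw [hins, Finset.sup_insert]; rfl
        rcases F₀.eq_empty_or_nonempty with he | hne0
        · rw [he] at hsup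
          simp only [Finset.sup_empty, sup_bot_eq] at hsup
          have hb_bot : b = ⊥ := by
            have : bᶜ = ⊤ := by rw [← hsup, htop]
            simpa [compl_eq_top] using this
          obtain ⟨h, hh⟩ := hinf.nonempty
          exact hH0 h hh (le_bot_iff.mp (hb_bot ▸ hub h hh))
        · have hs : F₀.sup id ≤ b := hsupb F₀ (hsub F hF)
          have hbs : b ≤ F₀.sup id := by
            calc b = b ⊓ (bᶜ ⊔ F₀.sup id) := by rw [← hsup, htop, inf_top_eq]
              _ = (b ⊓ bᶜ) ⊔ (b ⊓ F₀.sup id) := inf_sup_left b _ _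
              _ = b ⊓ F₀.sup id := by rw [inf_compl_eq_bot, bot_sup_eq]
              _ ≤ F₀.sup id := inf_le_right
          have hbeq : b = F₀.sup id := le_antisymm hbs hs
          obtain ⟨h, hhH, hhF⟩ := (hinf.diff F₀.finite_toSet).nonempty
          have hle1 : ({h} : Finset B).inf id ≤ F₀.sup id := by
            simpa [hbeq] using hub h hhH
          have := hb3 {h} F₀ ⟨h, Finset.mem_singleton_self h⟩ hne0
            (by simpa using hhH) (hsub F hF)
            (by simpa using hH0 h hhH) hle1
          obtain ⟨y, hy⟩ := this
          rw [Finset.mem_inter, Finset.mem_singleton] at hy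
          obtain ⟨rfl, hy2⟩ := hy
          exact hhF hy2
      · exact hb1 F hFne (hnotin F hF hbF) htop
    · -- (⊥2)
      intro F hFne hF hFinf
      by_cases hbF : bᶜ ∈ F
      · set F₀ := F.erase bᶜ with hF₀
        rcases F₀.eq_empty_or_nonempty with he | ⟨h, hh⟩
        · have : F = {bᶜ} := by
            have hins : F = insert bᶜ F₀ := (Finset.insert_erase hbF).symm
            rw [hins, he]; rfl
          rw [this] at hFinf
          simp only [Finset.inf_singleton, id] at hFinf
          exact absurd hFinf hbc
        · have hhH : h ∈ H := hsub F hF hh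
          refine ⟨insert h {bᶜ}, ?_, ?_, ?_⟩
          · intro x hx
            rcases Finset.mem_insert.mp hx with h1 | h1
            · subst h1; exact Finset.mem_of_mem_erase hh
            · rw [Finset.mem_singleton] at h1; subst h1; exact hbF
          · calc ((insert h {bᶜ} : Finset B).card : ℕ∞)
                ≤ (({bᶜ} : Finset B).card + 1 : ℕ) := by
                  exact_mod_cast Finset.card_insert_le h {bᶜ}
              _ ≤ 2 := by norm_num
              _ ≤ n := hn
          · have : h ⊓ bᶜ = ⊥ := by
              apply le_antisymm _ bot_le
              calc h ⊓ bᶜ ≤ b ⊓ bᶜ := inf_le_inf_right _ (hub h hhH)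
                _ = ⊥ := inf_compl_eq_bot
            simpa using this
      · exact hb2 F hFne (hnotin F hF hbF) hFinf
    · -- (⊥3)
      intro F G hFne hGne hF hG hFinf hle
      by_cases hbF : bᶜ ∈ F
      · by_cases hbG : bᶜ ∈ G
        · exact ⟨bᶜ, Finset.mem_inter.mpr ⟨hbF, hbG⟩⟩
        · exfalso
          have hGH : ↑G ⊆ H := hnotin G hG hbG
          have h1 : F.inf id ≤ bᶜ := Finset.inf_le hbF
          have h2 : F.inf id ≤ b := le_trans hle (hsupb G hGH)
          exact hFinf (le_bot_iff.mp (by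
            calc F.inf id ≤ b ⊓ bᶜ := le_inf h2 h1
              _ = ⊥ := inf_compl_eq_bot))
      · have hFH : ↑F ⊆ H := hnotin F hF hbF
        by_cases hbG : bᶜ ∈ G
        · set G₀ := G.erase bᶜ with hG₀
          have hins : G = insert bᶜ G₀ := (Finset.insert_erase hbG).symm
          have hsup : G.sup id = bᶜ ⊔ G₀.sup id := by
            rw [hins, Finset.sup_insert]; rfl
          have h2 : F.inf id ≤ b := hinfb F hFne hFH
          have h3 : F.inf id ≤ G₀.sup id := by
            calc F.inf id ≤ b ⊓ (bᶜ ⊔ G₀.sup id) := le_inf h2 (hsup ▸ hle)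
              _ = (b ⊓ bᶜ) ⊔ (b ⊓ G₀.sup id) := inf_sup_left b _ _
              _ = b ⊓ G₀.sup id := by rw [inf_compl_eq_bot, bot_sup_eq]
              _ ≤ G₀.sup id := inf_le_right
          rcases G₀.eq_empty_or_nonempty with he | hne0
          · exfalso
            rw [he] at h3
            simp only [Finset.sup_empty] at h3
            exact hFinf (le_bot_iff.mp h3)
          · obtain ⟨y, hy⟩ := hb3 F G₀ hFne hne0 hFH (hsub G hG) hFinf h3
            rw [Finset.mem_inter] at hy
            exact ⟨y, Finset.mem_inter.mpr ⟨hy.1, Finset.mem_of_mem_erase hy.2⟩⟩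
        · exact hb3 F G hFne hGne hFH (hnotin G hG hbG) hFinf hle
  refine ⟨main, ?_⟩
  intro hmax
  constructor
  · intro x _; exact le_top
  · intro b hb
    by_contra hlt
    have hblt : b < ⊤ := lt_top_iff_ne_top.mpr (fun h => hlt (le_of_eq h.symm))
    have hbc : (bᶜ : B) ≠ ⊥ := by
      simpa [compl_eq_bot] using hblt.ne
    have hY0 : ∀ y ∈ H ∪ {bᶜ}, y ≠ ⊥ := by
      intro y hy
      rcases hy with h | h
      · exact hH0 y h
      · rw [Set.mem_singleton_iff] at h; subst h; exact hbc
    have hYeq := hmax (H ∪ {bᶜ}) hY0 (main b hblt (fun h hh => hb hh))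
      Set.subset_union_left
    have hbcH : bᶜ ∈ H := by
      rw [← hYeq]; exact Set.mem_union_right _ rfl
    have : bᶜ ≤ b := hb hbcH
    exact hbc (le_bot_iff.mp (by
      calc bᶜ ≤ b ⊓ bᶜ := le_inf this le_rfl
        _ = ⊥ := inf_compl_eq_bot))
end

section
/- Let 1 ≤ n ≤ ω and let X be a maximal n-independent subset of a Boolean algebra A. Then the set Y of nonzero elementary products of elements of X is weakly dense in A: for every a ∈ A⁺ there exists y ∈ Y with y ≤ a or y ≤ -a. -/
open scoped Classical

variable {A : Type*}

lemma hlp1 [BooleanAlgebra A] (G : Finset A) : G.inf (fun x => xᶜ) = (G.sup id)ᶜ := by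
  induction G using Finset.induction with
  | empty => simp
  | insert _ _ h ih => rw [Finset.inf_insert, Finset.sup_insert, ih, compl_sup, id]

lemma hlp2 [BooleanAlgebra A] {a s t : A} (h : a ⊓ t ≤ s) : t ⊓ sᶜ ≤ aᶜ := by
  rw [le_compl_iff_disjoint_left, disjoint_iff]
  refine le_antisymm ?_ bot_le
  calc a ⊓ (t ⊓ sᶜ) = (a ⊓ t) ⊓ sᶜ := by rw [inf_assoc]
    _ ≤ s ⊓ sᶜ := inf_le_inf_right _ h
    _ = ⊥ := inf_compl_eq_bot

lemma hlp3 [BooleanAlgebra A] {x y : A} (h : x ⊓ yᶜ = ⊥) : x ≤ y := by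
  rwa [← sdiff_eq, sdiff_eq_bot_iff] at h

lemma hlp4 [BooleanAlgebra A] {a s : A} (h : a ⊔ s = ⊤) : sᶜ ≤ a := by
  calc sᶜ = sᶜ ⊓ (a ⊔ s) := by rw [h, inf_top_eq]
    _ = sᶜ ⊓ a ⊔ sᶜ ⊓ s := inf_sup_left _ _ _
    _ = sᶜ ⊓ a := by simp
    _ ≤ a := inf_le_right

lemma hlp5 [BooleanAlgebra A] {x a s : A} (h : x ≤ a ⊔ s) : x ⊓ sᶜ ≤ a := by
  calc x ⊓ sᶜ ≤ (a ⊔ s) ⊓ sᶜ := inf_le_inf_right _ h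
    _ = a ⊓ sᶜ ⊔ s ⊓ sᶜ := inf_sup_right _ _ _
    _ = a ⊓ sᶜ := by simp
    _ ≤ a := inf_le_left

lemma hlpT [BooleanAlgebra A] (F : Finset A) (ε : A → Bool) (h : ∀ x ∈ F, ε x = true) :
    elemProd F ε = F.inf id :=
  Finset.inf_congr rfl (fun x hx => by simp [h x hx])

lemma hlpF [BooleanAlgebra A] (F : Finset A) (ε : A → Bool) (h : ∀ x ∈ F, ε x = false) :
    elemProd F ε = (F.sup id)ᶜ := by
  rw [← hlp1]
  exact Finset.inf_congr rfl (fun x hx => by simp [h x hx])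

lemma hlpU [BooleanAlgebra A] (F G : Finset A) (h : ∀ x ∈ G, x ∉ F) :
    elemProd (F ∪ G) (fun x => decide (x ∈ F)) = F.inf id ⊓ (G.sup id)ᶜ := by
  rw [elemProd, Finset.inf_union]
  congr 1
  · exact Finset.inf_congr rfl (fun x hx => by simp [hx])
  · rw [← hlp1]
    exact Finset.inf_congr rfl (fun x hx => by simp [h x hx])

/-- for `1 ≤ n ≤ ω`, if `X` is a maximal n-independent subset of `A`,
then the nonzero elementary products of elements of `X` are weakly dense in `A`. -/
theorem stmt_15 [BooleanAlgebra A] (n : ℕ∞) (hn : 1 ≤ n)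
    (X : Set A) (hX : NIndep n X)
    (hmax : ∀ Y : Set A, NIndep n Y → X ⊆ Y → Y = X) :
    ∀ a : A, a ≠ ⊥ → ∃ (R : Finset A) (ε : A → Bool), ↑R ⊆ X ∧
      elemProd R ε ≠ ⊥ ∧ (elemProd R ε ≤ a ∨ elemProd R ε ≤ aᶜ) := by
  obtain ⟨hb, h1, h2, h3⟩ := hX
  intro a ha
  by_cases haX : a ∈ X
  · refine ⟨{a}, fun _ => true, by simpa using haX, ?_, Or.inl ?_⟩
    · rwa [hlpT _ _ (fun _ _ => rfl), Finset.inf_singleton]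
    · rw [hlpT _ _ (fun _ _ => rfl), Finset.inf_singleton, id]
  have hnind : ¬ NIndep n (X ∪ {a}) := fun h => haX (by
    have := hmax _ h Set.subset_union_left
    rw [← this]; exact Set.mem_union_right _ rfl)
  have P1 : (⊥ : A) ∉ X ∪ {a} := by
    rintro (h | h)
    · exact hb h
    · exact ha (Set.mem_singleton_iff.mp h).symm
  have hsub : ∀ F : Finset A, ↑F ⊆ X ∪ {a} → a ∉ F → ↑F ⊆ X := by
    intro F hF haF x hx
    rcases hF hx with h | h
    · exact h
    · exact absurd ((Set.mem_singleton_iff.mp h) ▸ (Finset.mem_coe.mp hx)) haF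
  have herase : ∀ F : Finset A, ↑F ⊆ X ∪ {a} → ↑(F.erase a) ⊆ X := by
    intro F hF x hx
    obtain ⟨hne, hmem⟩ := Finset.mem_erase.mp (Finset.mem_coe.mp hx)
    rcases hF (Finset.mem_coe.mpr hmem) with h | h
    · exact h
    · exact absurd (Set.mem_singleton_iff.mp h) hne
  rcases not_and_or.mp hnind with h | h
  · exact absurd P1 h
  rcases not_and_or.mp h with h | h
  · -- failure of (⊥1)
    push_neg at h
    obtain ⟨F, hFne, hFsub, hFtop⟩ := h
    have haF : a ∈ F := by
      by_contra haF
      exact h1 F hFne (hsub F hFsub haF) hFtop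
    have hsupF : a ⊔ (F.erase a).sup id = ⊤ := by
      rw [← hFtop]
      conv_rhs => rw [← Finset.insert_erase haF]
      rw [Finset.sup_insert, id]
    rcases Finset.eq_empty_or_nonempty (F.erase a) with hE | hNE
    · have hatop : a = ⊤ := by rw [hE] at hsupF; simpa using hsupF
      have heq : elemProd (∅ : Finset A) (fun _ => true) = ⊤ := by simp [elemProd]
      exact ⟨∅, fun _ => true, by simp, by rw [heq]; exact hatop ▸ ha,
        Or.inl (by rw [heq, hatop])⟩
    · refine ⟨F.erase a, fun _ => false, herase F hFsub, ?_, Or.inl ?_⟩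
      · rw [hlpF _ _ (fun _ _ => rfl)]
        intro hc
        exact h1 _ hNE (herase F hFsub) (compl_eq_bot.mp hc)
      · rw [hlpF _ _ (fun _ _ => rfl)]
        exact hlp4 hsupF
  rcases not_and_or.mp h with h | h
  · -- failure of (⊥2)
    push_neg at h
    obtain ⟨F, hFne, hFsub, hFbot, hno⟩ := h
    have haF : a ∈ F := by
      by_contra haF
      obtain ⟨F', hF's, hcard, hinf⟩ := h2 F hFne (hsub F hFsub haF) hFbot
      exact hno F' hF's hcard hinf
    have hNE : (F.erase a).Nonempty := by
      rcases Finset.eq_empty_or_nonempty (F.erase a) with hE | h'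
      · exfalso
        have hFeq : F = {a} := by
          rw [← Finset.insert_erase haF, hE]; rfl
        rw [hFeq] at hFbot
        simp at hFbot
        exact ha hFbot
      · exact h'
    have hinfF : a ⊓ (F.erase a).inf id = ⊥ := by
      rw [← hFbot]
      conv_rhs => rw [← Finset.insert_erase haF]
      rw [Finset.inf_insert, id]
    have hne' : (F.erase a).inf id ≠ ⊥ := by
      intro hc
      obtain ⟨F'', hs'', hcard, hinf⟩ := h2 _ hNE (herase F hFsub) hc
      exact hno F'' (hs''.trans (Finset.erase_subset _ _)) hcard hinf
    refine ⟨F.erase a, fun _ => true, herase F hFsub, ?_, Or.inr ?_⟩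
    · rwa [hlpT _ _ (fun _ _ => rfl)]
    · rw [hlpT _ _ (fun _ _ => rfl)]
      exact le_compl_iff_disjoint_left.mpr (disjoint_iff.mpr hinfF)
  · -- failure of (⊥3)
    push_neg at h
    obtain ⟨F, G, hFne, hGne, hFsub, hGsub, hFinf, hle, hFG⟩ := h
    have hdisj : ∀ x, x ∈ F → x ∈ G → False := by
      intro x hxF hxG
      exact (Finset.not_nonempty_iff_eq_empty.mpr hFG) ⟨x, Finset.mem_inter.mpr ⟨hxF, hxG⟩⟩
    by_cases haG : a ∈ G
    · have haF : a ∉ F := fun hh => hdisj a hh haG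
      have hFX : ↑F ⊆ X := hsub F hFsub haF
      have hsupG : G.sup id = a ⊔ (G.erase a).sup id := by
        conv_lhs => rw [← Finset.insert_erase haG]
        rw [Finset.sup_insert, id]
      rcases Finset.eq_empty_or_nonempty (G.erase a) with hE | hNE
      · have hla : F.inf id ≤ a := by
          rw [hsupG, hE] at hle; simpa using hle
        exact ⟨F, fun _ => true, hFX, by rwa [hlpT _ _ fun _ _ => rfl],
          Or.inl (by rw [hlpT _ _ fun _ _ => rfl]; exact hla)⟩
      · have hG₀X : ↑(G.erase a) ⊆ X := herase G hGsub
        have hFG₀ : ∀ x ∈ G.erase a, x ∉ F :=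
          fun x hx hxF => hdisj x hxF (Finset.mem_of_mem_erase hx)
        have hynz : F.inf id ⊓ ((G.erase a).sup id)ᶜ ≠ ⊥ := by
          intro hc
          obtain ⟨x, hx⟩ := h3 F (G.erase a) hFne hNE hFX hG₀X hFinf (hlp3 hc)
          exact hFG₀ x (Finset.mem_inter.mp hx).2 (Finset.mem_inter.mp hx).1
        refine ⟨F ∪ G.erase a, fun x => decide (x ∈ F), ?_, ?_, Or.inl ?_⟩
        · intro x hx
          rcases Finset.mem_union.mp (Finset.mem_coe.mp hx) with hh | hh
          · exact hFX (Finset.mem_coe.mpr hh)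
          · exact hG₀X (Finset.mem_coe.mpr hh)
        · rwa [hlpU F (G.erase a) hFG₀]
        · rw [hlpU F (G.erase a) hFG₀]
          rw [hsupG] at hle
          exact hlp5 hle
    · have hGX : ↑G ⊆ X := hsub G hGsub haG
      have haF : a ∈ F := by
        by_contra haF
        obtain ⟨x, hx⟩ := h3 F G hFne hGne (hsub F hFsub haF) hGX hFinf hle
        exact hdisj x (Finset.mem_inter.mp hx).1 (Finset.mem_inter.mp hx).2
      have hF₀X : ↑(F.erase a) ⊆ X := herase F hFsub
      have hinfF : F.inf id = a ⊓ (F.erase a).inf id := by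
        conv_lhs => rw [← Finset.insert_erase haF]
        rw [Finset.inf_insert, id]
      rcases Finset.eq_empty_or_nonempty (F.erase a) with hE | hNE
      · have hale : a ≤ G.sup id := by
          rw [hinfF, hE] at hle; simpa using hle
        refine ⟨G, fun _ => false, hGX, ?_, Or.inr ?_⟩
        · rw [hlpF _ _ fun _ _ => rfl]
          intro hc
          exact h1 G hGne hGX (compl_eq_bot.mp hc)
        · rw [hlpF _ _ fun _ _ => rfl]
          exact compl_le_compl hale
      · have hF₀G : ∀ x ∈ G, x ∉ F.erase a :=
          fun x hx hxF => hdisj x (Finset.mem_of_mem_erase hxF) hx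
        have hF₀nz : (F.erase a).inf id ≠ ⊥ := by
          intro hc
          exact hFinf (by rw [hinfF, hc, inf_bot_eq])
        have hynz : (F.erase a).inf id ⊓ (G.sup id)ᶜ ≠ ⊥ := by
          intro hc
          obtain ⟨x, hx⟩ := h3 (F.erase a) G hNE hGne hF₀X hGX hF₀nz (hlp3 hc)
          exact hF₀G x (Finset.mem_inter.mp hx).2 (Finset.mem_inter.mp hx).1
        refine ⟨F.erase a ∪ G, fun x => decide (x ∈ F.erase a), ?_, ?_, Or.inr ?_⟩
        · intro x hx
          rcases Finset.mem_union.mp (Finset.mem_coe.mp hx) with hh | hh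
          · exact hF₀X (Finset.mem_coe.mpr hh)
          · exact hGX (Finset.mem_coe.mpr hh)
        · rwa [hlpU (F.erase a) G hF₀G]
        · rw [hlpU (F.erase a) G hF₀G]
          rw [hinfF] at hle
          exact hlp2 hle
end

section
/- The set X = {({α}, x_α) : α < ω₁} ∪ {(1,0)} is a 3-independent generating set of the product Boolean algebra FinCo(ω₁) × Fr(ω₁), where ⟨x_α : α < ω₁⟩ is an independent generating set of Fr(ω₁); hence FinCo(ω₁) × Fr(ω₁) is 3-free. -/
open scoped Classical

variable {A : Type*}

/-- A Boolean subalgebra, as a set closed under the operations. -/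
structure BoolSubalg (A : Type*) [BooleanAlgebra A] where
  carrier : Set A
  bot_mem : ⊥ ∈ carrier
  top_mem : ⊤ ∈ carrier
  inf_mem : ∀ {x y}, x ∈ carrier → y ∈ carrier → x ⊓ y ∈ carrier
  sup_mem : ∀ {x y}, x ∈ carrier → y ∈ carrier → x ⊔ y ∈ carrier
  compl_mem : ∀ {x}, x ∈ carrier → xᶜ ∈ carrier

namespace BoolSubalg

variable {A : Type*} [BooleanAlgebra A]

instance : SetLike (BoolSubalg A) A where
  coe := carrier
  coe_injective := fun S T h => by cases S; cases T; congr

variable (S : BoolSubalg A)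

instance : Max ↥S := ⟨fun x y => ⟨x.1 ⊔ y.1, S.sup_mem x.2 y.2⟩⟩
instance : Min ↥S := ⟨fun x y => ⟨x.1 ⊓ y.1, S.inf_mem x.2 y.2⟩⟩
instance : Top ↥S := ⟨⟨⊤, S.top_mem⟩⟩
instance : Bot ↥S := ⟨⟨⊥, S.bot_mem⟩⟩
instance : Compl ↥S := ⟨fun x => ⟨x.1ᶜ, S.compl_mem x.2⟩⟩
instance : SDiff ↥S := ⟨fun x y => ⟨x.1 ⊓ y.1ᶜ, S.inf_mem x.2 (S.compl_mem y.2)⟩⟩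
instance : HImp ↥S := ⟨fun x y => ⟨x.1ᶜ ⊔ y.1, S.sup_mem (S.compl_mem x.2) y.2⟩⟩

instance : BooleanAlgebra ↥S :=
  Subtype.coe_injective.booleanAlgebra Subtype.val Iff.rfl Iff.rfl (fun _ _ => rfl) (fun _ _ => rfl)
    rfl rfl (fun _ => rfl) (fun _ _ => sdiff_eq.symm)
    (fun _ _ => by rw [himp_eq, sup_comm]; rfl)

end BoolSubalg

/-- The finite-cofinite algebra on `W`, as a subalgebra of the power set algebra. -/
def finCoAlg (W : Type*) : BoolSubalg (Set W) where
  carrier := {s | s.Finite ∨ sᶜ.Finite}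
  bot_mem := Or.inl (Set.finite_empty)
  top_mem := Or.inr (by simp)
  inf_mem := by
    rintro x y (hx | hx) hy
    · exact Or.inl (hx.inter_of_left y)
    · rcases hy with hy | hy
      · exact Or.inl (hy.inter_of_right x)
      · exact Or.inr (by simpa [Set.compl_inter] using hx.union hy)
  sup_mem := by
    rintro x y hx (hy | hy)
    · rcases hx with hx | hx
      · exact Or.inl (hx.union hy)
      · exact Or.inr (hx.subset (Set.compl_subset_compl.2 le_sup_left))
    · exact Or.inr (by
        have : (x ⊔ y)ᶜ = xᶜ ∩ yᶜ := by simp [Set.compl_union]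
        rw [this]; exact hy.inter_of_right _)
  compl_mem := by rintro x (hx | hx)
                  · exact Or.inr (by simpa using hx)
                  · exact Or.inl hx

section Stmt18Helpers

lemma fst_finset_inf {ι A B : Type*} [SemilatticeInf A] [OrderTop A] [SemilatticeInf B] [OrderTop B]
    (s : Finset ι) (f : ι → A × B) : (s.inf f).1 = s.inf fun i => (f i).1 := by
  induction s using Finset.induction_on with
  | empty => rfl
  | @insert a s ha ih => simp [Finset.inf_insert, ih]

lemma snd_finset_inf {ι A B : Type*} [SemilatticeInf A] [OrderTop A] [SemilatticeInf B] [OrderTop B]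
    (s : Finset ι) (f : ι → A × B) : (s.inf f).2 = s.inf fun i => (f i).2 := by
  induction s using Finset.induction_on with
  | empty => rfl
  | @insert a s ha ih => simp [Finset.inf_insert, ih]

lemma fst_finset_sup {ι A B : Type*} [SemilatticeSup A] [OrderBot A] [SemilatticeSup B] [OrderBot B]
    (s : Finset ι) (f : ι → A × B) : (s.sup f).1 = s.sup fun i => (f i).1 := by
  induction s using Finset.induction_on with
  | empty => rfl
  | @insert a s ha ih => simp [Finset.sup_insert, ih]

lemma snd_finset_sup {ι A B : Type*} [SemilatticeSup A] [OrderBot A] [SemilatticeSup B] [OrderBot B]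
    (s : Finset ι) (f : ι → A × B) : (s.sup f).2 = s.sup fun i => (f i).2 := by
  induction s using Finset.induction_on with
  | empty => rfl
  | @insert a s ha ih => simp [Finset.sup_insert, ih]

lemma compl_finset_sup {ι A : Type*} [BooleanAlgebra A] (s : Finset ι) (f : ι → A) :
    (s.sup f)ᶜ = s.inf fun i => (f i)ᶜ := by
  induction s using Finset.induction_on with
  | empty => simp
  | @insert a s ha ih => simp [Finset.sup_insert, compl_sup, ih]

lemma sup_singletons {W : Type*} (T : Finset W) :
    (T.sup fun β => ({β} : Set W)) = ↑T := by
  induction T using Finset.induction_on with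
  | empty => simp
  | @insert a s ha ih => rw [Finset.sup_insert, ih, Finset.coe_insert, Set.insert_eq]; rfl

lemma val_finset_inf {A : Type*} [BooleanAlgebra A] (S : BoolSubalg A) {ι : Type*}
    (s : Finset ι) (f : ι → ↥S) : ((s.inf f : ↥S) : A) = s.inf fun i => ((f i : ↥S) : A) := by
  induction s using Finset.induction_on with
  | empty => rfl
  | @insert a s ha ih => rw [Finset.inf_insert, Finset.inf_insert, ← ih]; rfl

lemma val_finset_sup {A : Type*} [BooleanAlgebra A] (S : BoolSubalg A) {ι : Type*}
    (s : Finset ι) (f : ι → ↥S) : ((s.sup f : ↥S) : A) = s.sup fun i => ((f i : ↥S) : A) := by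
  induction s using Finset.induction_on with
  | empty => rfl
  | @insert a s ha ih => rw [Finset.sup_insert, Finset.sup_insert, ← ih]; rfl

end Stmt18Helpers

/-- with `x : W → F` an independent generating family of `F ≅ Fr(ω₁)`
and `W` of size `ℵ₁`, the set `X = {({α}, x_α) : α ∈ W} ∪ {(1, 0)}` is a
3-independent generating set of `FinCo(ω₁) × Fr(ω₁)`; hence this product is 3-free. -/
theorem stmt_18 {W : Type} (hW : Cardinal.mk W = Cardinal.aleph 1)
    {F : Type} [BooleanAlgebra F] (x : W → F)
    (hxgen : Generates (Set.range x))
    (hxind : ∀ R G : Finset W, Disjoint R G →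
        R.inf x ⊓ G.inf (fun w => (x w)ᶜ) ≠ ⊥) :
    NIndep 3
      ((Set.range fun α : W =>
          ((⟨{α}, Or.inl (Set.finite_singleton α)⟩ : ↥(finCoAlg W)), x α)) ∪
        {((⊤ : ↥(finCoAlg W)), (⊥ : F))}) ∧
    Generates
      ((Set.range fun α : W =>
          ((⟨{α}, Or.inl (Set.finite_singleton α)⟩ : ↥(finCoAlg W)), x α)) ∪
        {((⊤ : ↥(finCoAlg W)), (⊥ : F))}) := by
  classical
  have hWinf : Infinite W := by
    rw [Cardinal.infinite_iff, hW]; exact Cardinal.aleph0_le_aleph 1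
  have hWne : Nonempty W := inferInstance
  set e : W → ↥(finCoAlg W) × F := fun α : W =>
      ((⟨{α}, Or.inl (Set.finite_singleton α)⟩ : ↥(finCoAlg W)), x α) with he
  set t : ↥(finCoAlg W) × F := ((⊤ : ↥(finCoAlg W)), (⊥ : F)) with ht
  set X : Set (↥(finCoAlg W) × F) := Set.range e ∪ {t} with hX
  -- basic consequences of independence of x
  have hinfx : ∀ S : Finset W, S.inf x ≠ ⊥ := by
    intro S; simpa using hxind S ∅ (by simp)
  have hinfc : ∀ T : Finset W, (T.inf fun w => (x w)ᶜ) ≠ ⊥ := by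
    intro T; simpa using hxind ∅ T (by simp)
  have hsupx : ∀ T : Finset W, T.sup x ≠ ⊤ := by
    intro T h
    exact hinfc T (by rw [← compl_finset_sup, h, compl_top])
  have he_inj : Function.Injective e := by
    intro a b h
    have h1 := congrArg (fun p : ↥(finCoAlg W) × F => ((p.1 : ↥(finCoAlg W)) : Set W)) h
    simp only [he] at h1
    simpa [Set.singleton_eq_singleton_iff] using h1
  have hmem : ∀ p : ↥(finCoAlg W) × F, p ∈ X → p = t ∨ ∃ α, p = e α := by
    intro p hp
    rcases hp with ⟨α, rfl⟩ | hp
    · exact Or.inr ⟨α, rfl⟩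
    · exact Or.inl hp
  have hdecomp : ∀ G : Finset (↥(finCoAlg W) × F), ↑G ⊆ X →
      ∃ T : Finset W, (∀ α, α ∈ T ↔ e α ∈ G) ∧
        (t ∈ G → G = insert t (T.image e)) ∧ (t ∉ G → G = T.image e) := by
    intro G hG
    refine ⟨G.preimage e he_inj.injOn, fun α => Finset.mem_preimage, ?_, ?_⟩
    · intro htG
      ext p; constructor
      · intro hp
        rcases hmem p (hG hp) with rfl | ⟨α, rfl⟩
        · exact Finset.mem_insert_self _ _
        · exact Finset.mem_insert_of_mem
            (Finset.mem_image_of_mem e (Finset.mem_preimage.mpr hp))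
      · intro hp
        rcases Finset.mem_insert.mp hp with rfl | hp
        · exact htG
        · obtain ⟨α, hα, rfl⟩ := Finset.mem_image.mp hp
          exact Finset.mem_preimage.mp hα
    · intro htG
      ext p; constructor
      · intro hp
        rcases hmem p (hG hp) with rfl | ⟨α, rfl⟩
        · exact absurd hp htG
        · exact Finset.mem_image_of_mem e (Finset.mem_preimage.mpr hp)
      · intro hp
        obtain ⟨α, hα, rfl⟩ := Finset.mem_image.mp hp
        exact Finset.mem_preimage.mp hα
  -- componentwise computations
  have hfst_inf_pair : ∀ p q : ↥(finCoAlg W) × F,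
      (((p ⊓ q).1 : ↥(finCoAlg W)) : Set W) = ((p.1 : ↥(finCoAlg W)) : Set W) ∩ ((q.1 : ↥(finCoAlg W)) : Set W) :=
    fun p q => rfl
  have hval_inf_e : ∀ T : Finset W,
      (((T.inf e).1 : ↥(finCoAlg W)) : Set W) = T.inf fun α => ({α} : Set W) := by
    intro T
    rw [fst_finset_inf, val_finset_inf]
  have hsnd_inf_e : ∀ T : Finset W, (T.inf e).2 = T.inf x := by
    intro T
    rw [snd_finset_inf]
  have hsup_bound : ∀ (G : Finset (↥(finCoAlg W) × F)) (T : Finset W), ↑G ⊆ X →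
      (∀ α, α ∈ T ↔ e α ∈ G) → (G.sup id).2 ≤ T.sup x := by
    intro G T hG hT
    rw [snd_finset_sup]
    refine Finset.sup_le fun p hp => ?_
    rcases hmem p (hG hp) with rfl | ⟨α, rfl⟩
    · show (⊥ : F) ≤ _
      exact bot_le
    · have hα : α ∈ T := (hT α).mpr hp
      show x α ≤ T.sup x
      exact Finset.le_sup hα
  have hbotab : ∀ a b : W, a ≠ b → t ⊓ (e a ⊓ e b) = ⊥ := by
    intro a b hab
    refine Prod.ext_iff.mpr ⟨?_, ?_⟩
    · apply Subtype.ext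
      show Set.univ ∩ ({a} ∩ {b}) = ∅
      rw [Set.univ_inter]
      exact Set.singleton_inter_eq_empty.mpr (by simpa using hab)
    · show (⊥ : F) ⊓ _ = ⊥
      exact bot_inf_eq _
  constructor
  · refine ⟨?_, ?_, ?_, ?_⟩
    -- ⊥ ∉ X
    · intro h
      rcases hmem ⊥ h with h1 | ⟨α, h1⟩
      · have h2 : ((⊥ : ↥(finCoAlg W)) : Set W) = ((⊤ : ↥(finCoAlg W)) : Set W) :=
          congrArg (fun p : ↥(finCoAlg W) × F => ((p.1 : ↥(finCoAlg W)) : Set W)) h1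
        have h3 : (∅ : Set W) = Set.univ := h2
        have h4 : (Set.univ : Set W).Nonempty := Set.univ_nonempty
        rw [← h3] at h4
        simp at h4
      · have h2 : (⊥ : F) = x α := by
          have := congrArg Prod.snd h1
          simpa [he] using this
        exact hinfx {α} (by simpa using h2.symm)
    -- (⊥1)
    · intro G hGne hGX h
      obtain ⟨T, hT, _, _⟩ := hdecomp G hGX
      have hb := hsup_bound G T hGX hT
      rw [h] at hb
      have hb' : (⊤ : F) ≤ T.sup x := hb
      exact hsupx T (top_le_iff.mp hb')
    -- (⊥2)₃
    · intro G hGne hGX h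
      obtain ⟨T, hT, hdect, hdecf⟩ := hdecomp G hGX
      by_cases htG : t ∈ G
      · have h3 : G.inf id = t ⊓ T.inf e := by
          rw [hdect htG]
          simp only [Finset.inf_insert, Finset.inf_image, Function.id_comp, id_eq]
        have h4 : Set.univ ∩ (((T.inf e).1 : ↥(finCoAlg W)) : Set W) = (∅ : Set W) := by
          have h5 := congrArg (fun p : ↥(finCoAlg W) × F => ((p.1 : ↥(finCoAlg W)) : Set W))
            (h3.symm.trans h)
          exact h5
        rw [Set.univ_inter, hval_inf_e] at h4
        have h6 : 1 < T.card := by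
          by_contra hle
          push_neg at hle
          rcases Finset.subset_singleton_iff.mp
              ((Finset.card_le_one_iff_subset_singleton.mp hle).choose_spec) with rfl | hTeq
          · rw [Finset.inf_empty] at h4
            have h7 : Classical.arbitrary W ∈ (⊤ : Set W) := trivial
            rw [h4] at h7
            exact h7
          · rw [hTeq, Finset.inf_singleton] at h4
            exact Set.singleton_ne_empty _ h4
        obtain ⟨a, ha, b, hb, hab⟩ := Finset.one_lt_card.mp h6
        refine ⟨{t, e a, e b}, ?_, ?_, ?_⟩
        · refine Finset.insert_subset_iff.mpr ⟨htG, Finset.insert_subset_iff.mpr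
            ⟨(hT a).mp ha, Finset.singleton_subset_iff.mpr ((hT b).mp hb)⟩⟩
        · have hc : ({t, e a, e b} : Finset (↥(finCoAlg W) × F)).card ≤ 3 := by
            calc ({t, e a, e b} : Finset (↥(finCoAlg W) × F)).card
                ≤ ({e a, e b} : Finset (↥(finCoAlg W) × F)).card + 1 :=
                  Finset.card_insert_le _ _
              _ ≤ (({e b} : Finset (↥(finCoAlg W) × F)).card + 1) + 1 :=
                  add_le_add_left (Finset.card_insert_le _ _) 1
              _ = 3 := by simp
          exact_mod_cast hc
        · have hz := hbotab a b hab
          simpa [Finset.inf_insert, id_eq] using hz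
      · exfalso
        have h3 : T.inf e = ⊥ := by
          rw [hdecf htG, Finset.inf_image, Function.id_comp] at h
          exact h
        have h4 : T.inf x = ⊥ := by rw [← hsnd_inf_e T, h3]; rfl
        exact hinfx T h4
    -- (⊥3)
    · intro G H hGne hHne hGX hHX hGinf hle
      by_contra hcon
      have hnot : ∀ p, p ∈ G → p ∈ H → False := by
        intro p hg hh
        apply hcon
        refine ⟨p, ?_⟩
        simp only [Finset.mem_inter]
        exact ⟨hg, hh⟩
      obtain ⟨S, hS, hdectS, hdecfS⟩ := hdecomp G hGX
      obtain ⟨T, hTm, hdectT, hdecfT⟩ := hdecomp H hHX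
      have hdisj : Disjoint S T := by
        rw [Finset.disjoint_left]
        intro a haS haT
        exact hnot _ ((hS a).mp haS) ((hTm a).mp haT)
      have hsb : (H.sup id).2 ≤ T.sup x := hsup_bound H T hHX hTm
      by_cases htG : t ∈ G
      · have htH : t ∉ H := by
          intro htH
          exact hnot t htG htH
        have hGeq : G.inf id = t ⊓ S.inf e := by
          rw [hdectS htG]
          simp only [Finset.inf_insert, Finset.inf_image, Function.id_comp, id_eq]
        have hHfst : (((H.sup id).1 : ↥(finCoAlg W)) : Set W) = ↑T := by
          rw [hdecfT htH, Finset.sup_image, Function.id_comp, fst_finset_sup, val_finset_sup]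
          rw [show (T.sup fun i => (((e i).1 : ↥(finCoAlg W)) : Set W))
              = T.sup fun β => ({β} : Set W) from
            Finset.sup_congr rfl (fun α _ => by simp [he])]
          exact sup_singletons T
        have hfle : (((G.inf id).1 : ↥(finCoAlg W)) : Set W) ⊆ ↑T := by
          have h1 : (G.inf id).1 ≤ (H.sup id).1 := (Prod.le_def.mp hle).1
          have h2 : (((G.inf id).1 : ↥(finCoAlg W)) : Set W) ⊆ (((H.sup id).1 : ↥(finCoAlg W)) : Set W) := h1
          rwa [hHfst] at h2
        have hGfst : (((G.inf id).1 : ↥(finCoAlg W)) : Set W)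
            = Set.univ ∩ (S.inf fun α => ({α} : Set W)) := by
          rw [hGeq, hfst_inf_pair, hval_inf_e]
          rfl
        rcases lt_or_ge 1 S.card with hSc | hSc
        · obtain ⟨a, ha, b, hb, hab⟩ := Finset.one_lt_card.mp hSc
          apply hGinf
          have h1 : G.inf id ≤ t ⊓ (e a ⊓ e b) := by
            rw [hGeq]
            exact inf_le_inf_left t (le_inf (Finset.inf_le ha) (Finset.inf_le hb))
          exact le_bot_iff.mp (h1.trans_eq (hbotab a b hab))
        · rcases Finset.subset_singleton_iff.mp
              ((Finset.card_le_one_iff_subset_singleton.mp hSc).choose_spec) with rfl | hSeq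
          · rw [hGfst, Finset.inf_empty] at hfle
            have huniv : (Set.univ : Set W) ⊆ ↑T := by
              intro w _; exact hfle (by exact ⟨trivial, trivial⟩)
            exact Set.infinite_univ (T.finite_toSet.subset huniv)
          · obtain ⟨a, rfl⟩ : ∃ a, S = {a} := ⟨_, hSeq⟩
            have haT : a ∈ T := by
              have h1 := hfle
              rw [hGfst, Finset.inf_singleton, Set.univ_inter] at h1
              simpa using h1 (Set.mem_singleton a)
            exact Finset.disjoint_left.mp hdisj (Finset.mem_singleton_self a) haT
      · have hSnd : (G.inf id).2 = S.inf x := by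
          rw [hdecfS htG, Finset.inf_image, Function.id_comp]
          exact hsnd_inf_e S
        have h1 : S.inf x ≤ T.sup x := by
          have h2 := (Prod.le_def.mp hle).2
          rw [hSnd] at h2
          exact h2.trans hsb
        have h2 : S.inf x ⊓ (T.inf fun w => (x w)ᶜ) = ⊥ := by
          have h3 : S.inf x ⊓ (T.sup x)ᶜ = ⊥ :=
            le_bot_iff.mp ((inf_le_inf_right _ h1).trans inf_compl_eq_bot.le)
          rwa [compl_finset_sup] at h3
        exact hxind S T hdisj h2
  -- Generates
  · have hGt : Gen X t := Gen.of (Or.inr rfl)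
    have hGe : ∀ α, Gen X (e α) := fun α => Gen.of (Or.inl ⟨α, rfl⟩)
    have hcompl_t : tᶜ = ((⊥ : ↥(finCoAlg W)), (⊤ : F)) := by
      refine Prod.ext_iff.mpr ⟨?_, ?_⟩
      · apply Subtype.ext
        show (Set.univ : Set W)ᶜ = ∅
        simp
      · show (⊥ : F)ᶜ = ⊤
        simp
    have hgen_snd : ∀ f : F, Gen X ((⊥ : ↥(finCoAlg W)), f) := by
      intro f
      induction hxgen f with
      | @of g hg =>
        obtain ⟨α, rfl⟩ := hg
        have heq : ((⊥ : ↥(finCoAlg W)), x α) = e α ⊓ tᶜ := by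
          rw [hcompl_t]
          refine Prod.ext_iff.mpr ⟨?_, ?_⟩
          · apply Subtype.ext
            show (∅ : Set W) = {α} ∩ ∅
            simp
          · show x α = x α ⊓ ⊤
            simp
        rw [heq]
        exact Gen.inf (hGe α) (Gen.compl hGt)
      | bot => exact Gen.bot
      | top =>
        rw [show ((⊥ : ↥(finCoAlg W)), (⊤ : F)) = tᶜ from hcompl_t.symm]
        exact Gen.compl hGt
      | @inf g h hg hh ihg ihh =>
        have heq : ((⊥ : ↥(finCoAlg W)), g ⊓ h)
            = ((⊥ : ↥(finCoAlg W)), g) ⊓ ((⊥ : ↥(finCoAlg W)), h) := by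
          refine Prod.ext_iff.mpr ⟨?_, rfl⟩
          apply Subtype.ext
          show (∅ : Set W) = ∅ ∩ ∅
          simp
        rw [heq]
        exact Gen.inf ihg ihh
      | @sup g h hg hh ihg ihh =>
        have heq : ((⊥ : ↥(finCoAlg W)), g ⊔ h)
            = ((⊥ : ↥(finCoAlg W)), g) ⊔ ((⊥ : ↥(finCoAlg W)), h) := by
          refine Prod.ext_iff.mpr ⟨?_, rfl⟩
          apply Subtype.ext
          show (∅ : Set W) = ∅ ∪ ∅
          simp
        rw [heq]
        exact Gen.sup ihg ihh
      | @compl g hg ih =>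
        have heq : ((⊥ : ↥(finCoAlg W)), gᶜ)
            = ((⊥ : ↥(finCoAlg W)), g)ᶜ ⊓ ((⊥ : ↥(finCoAlg W)), (⊤ : F)) := by
          refine Prod.ext_iff.mpr ⟨?_, ?_⟩
          · apply Subtype.ext
            show (∅ : Set W) = (∅ : Set W)ᶜ ∩ ∅
            simp
          · show gᶜ = gᶜ ⊓ ⊤
            simp
        rw [heq]
        refine Gen.inf (Gen.compl ih) ?_
        rw [show ((⊥ : ↥(finCoAlg W)), (⊤ : F)) = tᶜ from hcompl_t.symm]
        exact Gen.compl hGt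
    have hgen_single : ∀ α : W,
        Gen X ((⟨{α}, Or.inl (Set.finite_singleton α)⟩ : ↥(finCoAlg W)), (⊥ : F)) := by
      intro α
      have heq : ((⟨{α}, Or.inl (Set.finite_singleton α)⟩ : ↥(finCoAlg W)), (⊥ : F))
          = e α ⊓ t := by
        refine Prod.ext_iff.mpr ⟨?_, ?_⟩
        · apply Subtype.ext
          show ({α} : Set W) = {α} ∩ Set.univ
          simp
        · show (⊥ : F) = x α ⊓ ⊥
          simp
      rw [heq]
      exact Gen.inf (hGe α) hGt
    have hgen_finset : ∀ s : Finset W, ∀ h : (↑s : Set W) ∈ (finCoAlg W).carrier,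
        Gen X ((⟨(↑s : Set W), h⟩ : ↥(finCoAlg W)), (⊥ : F)) := by
      intro s
      induction s using Finset.induction_on with
      | empty =>
        intro h
        have heq : ((⟨(↑(∅ : Finset W) : Set W), h⟩ : ↥(finCoAlg W)), (⊥ : F))
            = (⊥ : ↥(finCoAlg W) × F) := by
          refine Prod.ext_iff.mpr ⟨?_, rfl⟩
          apply Subtype.ext
          show (↑(∅ : Finset W) : Set W) = ∅
          simp
        rw [heq]
        exact Gen.bot
      | @insert a s ha ih =>
        intro h
        have hs : (↑s : Set W) ∈ (finCoAlg W).carrier := Or.inl s.finite_toSet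
        have heq : ((⟨(↑(insert a s) : Set W), h⟩ : ↥(finCoAlg W)), (⊥ : F))
            = ((⟨{a}, Or.inl (Set.finite_singleton a)⟩ : ↥(finCoAlg W)), (⊥ : F))
              ⊔ ((⟨(↑s : Set W), hs⟩ : ↥(finCoAlg W)), (⊥ : F)) := by
          refine Prod.ext_iff.mpr ⟨?_, ?_⟩
          · apply Subtype.ext
            show (↑(insert a s) : Set W) = {a} ∪ ↑s
            rw [Finset.coe_insert, Set.insert_eq]
          · show (⊥ : F) = ⊥ ⊔ ⊥
            simp
        rw [heq]
        exact Gen.sup (hgen_single a) (ih hs)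
    have hgen_fst_fin : ∀ u : ↥(finCoAlg W), ((u : Set W)).Finite → Gen X (u, (⊥ : F)) := by
      intro u hu
      have heq : (u, (⊥ : F)) = ((⟨(↑hu.toFinset : Set W),
          Or.inl (by simpa using hu)⟩ : ↥(finCoAlg W)), (⊥ : F)) := by
        refine Prod.ext_iff.mpr ⟨Subtype.ext ?_, rfl⟩
        simp [Set.Finite.coe_toFinset]
      rw [heq]
      exact hgen_finset hu.toFinset _
    have hgen_fst : ∀ u : ↥(finCoAlg W), Gen X (u, (⊥ : F)) := by
      intro u
      rcases u.2 with hu | hu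
      · exact hgen_fst_fin u hu
      · have h1 : Gen X ((uᶜ : ↥(finCoAlg W)), (⊥ : F)) := hgen_fst_fin uᶜ hu
        have heq : (u, (⊥ : F)) = ((uᶜ : ↥(finCoAlg W)), (⊥ : F))ᶜ ⊓ t := by
          refine Prod.ext_iff.mpr ⟨?_, ?_⟩
          · apply Subtype.ext
            show (↑u : Set W) = ((↑u : Set W)ᶜ)ᶜ ∩ Set.univ
            simp
          · show (⊥ : F) = (⊥ : F)ᶜ ⊓ ⊥
            simp
        rw [heq]
        exact Gen.inf (Gen.compl h1) hGt
    intro a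
    obtain ⟨u, f⟩ := a
    have heq : ((u, f) : ↥(finCoAlg W) × F) = (u, (⊥ : F)) ⊔ ((⊥ : ↥(finCoAlg W)), f) := by
      refine Prod.ext_iff.mpr ⟨?_, ?_⟩
      · apply Subtype.ext
        show (↑u : Set W) = ↑u ∪ ∅
        simp
      · show f = ⊥ ⊔ f
        simp
    rw [heq]
    exact Gen.sup (hgen_fst u) (hgen_snd f)
end
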